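/- Let M, Q be real numbers with M > |Q|, M > 0, set F(r) = 1 - 2M/r + Q²/r², r₊ = M + √(M² - Q²). Let q be real, l a natural number, and m a real number with m ≥ |qQ|/r₊. Then for every r > r₊: F(r)·m² + F(r)·l(l+1)/r² + F(r)·F'(r)/r - q²Q²·(1/r - 1/r₊)² > 0. (This is the pointwise positivity of the density of the modified conserved energy Ẽ, showing that for m ≥ |qQ|/r₊ there is no superradiance.) -/

import Mathlib

set_option maxHeartbeats 1000000

theorem no_superradiance_for_large_mass
    (M Q q m : ℝ) (l : ℕ) (hMQ : |Q| < M) (hM : 0 < M)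
    (F : ℝ → ℝ) (hF : ∀ r, F r = 1 - 2*M/r + Q^2/r^2)
    (rp : ℝ) (hrp : rp = M + Real.sqrt (M^2 - Q^2))
    (hm : |q*Q|/rp ≤ m) :
    ∀ r > rp,
      0 < F r * m^2 + F r * ((l : ℝ)*((l : ℝ)+1))/r^2 + F r * deriv F r / r
            - q^2*Q^2*(1/r - 1/rp)^2 := by
  intro r hr
  set s := Real.sqrt (M^2 - Q^2) with hsdef
  have hQ2 : Q^2 < M^2 := by nlinarith [abs_nonneg Q, sq_abs Q]
  have hs2 : s^2 = M^2 - Q^2 := Real.sq_sqrt (by linarith)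
  have hs : 0 < s := Real.sqrt_pos.mpr (by linarith)
  have hsM : s ≤ M := by nlinarith [sq_nonneg Q]
  have hrp0 : 0 < rp := by rw [hrp]; linarith
  have hr0 : 0 < r := lt_trans hrp0 hr
  have hrM : M < rp := by rw [hrp]; linarith
  have hrne : r ≠ 0 := ne_of_gt hr0
  -- root identity
  have hroot : rp^2 - 2*M*rp + Q^2 = 0 := by rw [hrp]; nlinarith
  -- derivative of F
  have hFe : F = fun x => 1 - 2*M/x + Q^2/x^2 := funext hF
  have hderiv : deriv F r = 2*M/r^2 - 2*Q^2/r^3 := by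
    have h1 : HasDerivAt (fun x : ℝ => x⁻¹) (-(r^2)⁻¹) r := hasDerivAt_inv hrne
    have h2 : HasDerivAt (fun x : ℝ => 2*M*x⁻¹) (2*M*(-(r^2)⁻¹)) r := h1.const_mul (2*M)
    have h3 : HasDerivAt (fun x : ℝ => x^2) ((2:ℕ) * r^1) r := hasDerivAt_pow 2 r
    have h4 : HasDerivAt (fun x : ℝ => (x^2)⁻¹) (-((2:ℕ) * r^1) / (r^2)^2) r :=
      h3.inv (pow_ne_zero 2 hrne)
    have h5 : HasDerivAt (fun x : ℝ => Q^2*(x^2)⁻¹) (Q^2*(-((2:ℕ) * r^1) / (r^2)^2)) r :=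
      h4.const_mul (Q^2)
    have h6 : HasDerivAt (fun x : ℝ => 1 - 2*M*x⁻¹ + Q^2*(x^2)⁻¹)
        (0 - 2*M*(-(r^2)⁻¹) + Q^2*(-((2:ℕ) * r^1) / (r^2)^2)) r :=
      ((hasDerivAt_const r (1:ℝ)).sub h2).add h5
    have h7 : HasDerivAt F (0 - 2*M*(-(r^2)⁻¹) + Q^2*(-((2:ℕ) * r^1) / (r^2)^2)) r := by
      have heq : (fun x : ℝ => 1 - 2*M/x + Q^2/x^2)
          = fun x : ℝ => 1 - 2*M*x⁻¹ + Q^2*(x^2)⁻¹ := by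
        funext x
        rw [div_eq_mul_inv, div_eq_mul_inv]
      rw [hFe, heq]
      exact h6
    rw [h7.deriv]
    field_simp
    ring
  -- key facts
  have hu : 0 < r^2 - 2*M*r + Q^2 := by nlinarith
  have hMr : Q^2 < M*r := by nlinarith
  have hmm : q^2*Q^2 ≤ m^2 * rp^2 := by
    have h0 : 0 ≤ |q*Q|/rp := div_nonneg (abs_nonneg _) hrp0.le
    have := mul_le_mul hm hm h0 (le_trans h0 hm)
    have habs : |q*Q| * |q*Q| = q^2*Q^2 := by
      rw [← abs_mul, abs_of_nonneg (mul_self_nonneg (q*Q))]; ring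
    have h2 : |q*Q|/rp * (|q*Q|/rp) = q^2*Q^2/rp^2 := by
      rw [div_mul_div_comm, habs]
      ring_nf
    have h3 : q^2*Q^2/rp^2 ≤ m^2 := by rw [← h2]; nlinarith
    calc q^2*Q^2 = q^2*Q^2/rp^2 * rp^2 := by field_simp
    _ ≤ m^2 * rp^2 := by nlinarith [sq_nonneg rp, pow_pos hrp0 2]
  have key : F r * m^2 + F r * ((l : ℝ)*((l : ℝ)+1))/r^2 + F r * deriv F r / r
            - q^2*Q^2*(1/r - 1/rp)^2 =
      ((r^2 - 2*M*r + Q^2) * (r^4*m^2 + r^2*((l:ℝ)*((l:ℝ)+1))) * rp^2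
        + 2*(r^2 - 2*M*r + Q^2)*(M*r - Q^2)*rp^2
        - q^2*Q^2*(rp - r)^2*r^4) / (r^6 * rp^2) := by
    rw [hF r, hderiv]
    field_simp
  rw [key]
  apply div_pos
  · have hgap : (r - rp)^2 ≤ r^2 - 2*M*r + Q^2 := by nlinarith
    have hl : (0:ℝ) ≤ (l:ℝ)*((l:ℝ)+1) := by positivity
    have h4 : q^2*Q^2*(r - rp)^2 ≤ m^2*rp^2*(r^2 - 2*M*r + Q^2) :=
      mul_le_mul hmm hgap (sq_nonneg (r - rp)) (by positivity)
    have h5 : q^2*Q^2*(r - rp)^2*r^4 ≤ m^2*rp^2*(r^2 - 2*M*r + Q^2)*r^4 :=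
      mul_le_mul_of_nonneg_right h4 (by positivity)
    have h6 : 0 < 2*(r^2 - 2*M*r + Q^2)*(M*r - Q^2)*rp^2 := by
      have : 0 < M*r - Q^2 := by linarith
      positivity
    have h7 : 0 ≤ (r^2 - 2*M*r + Q^2)*(r^2*((l:ℝ)*((l:ℝ)+1)))*rp^2 := by positivity
    nlinarith [h5, h6, h7]
  · positivity
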